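/- arXiv:1704.05400 — 2 statements merged into one kernel-verified Lean document; each statement's English description precedes it below -/
import Mathlib

section
/- Let N be a positive integer and x : {0,…,N−1} → ℂ. For 0 ≤ k ≤ N−1 define t_k := ∑_{n=0}^{N−1−k} conj(x_n)·x_{n+k}. Then the quadruple sum ∑ conj(x_{n₃}) x_{n₁} · conj(x_{n₄}) x_{n₂}, taken over all (n₁,n₂,n₃,n₄) ∈ {0,…,N−1}⁴ satisfying n₁ − n₃ = −(n₂ − n₄) as integers, equals |t₀|² + 2·∑_{k=1}^{N−1} |t_k|². In particular this quadruple sum is a nonnegative real number. -/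
open BigOperators Finset
open scoped ComplexConjugate

/-- The quadruple sum `∑ conj (x n₃) * x n₁ * conj (x n₄) * x n₂` over all index
quadruples with `n₁ - n₃ = -(n₂ - n₄)` (as integers) equals
`|t 0|² + 2 ∑_{k=1}^{N-1} |t k|²`, where `t k = ∑_{n=0}^{N-1-k} conj (x n) * x (n+k)`.
In particular, the quadruple sum is a nonnegative real number. -/
theorem quadruple_sum_eq_sum_sq_abs (N : ℕ) (hN : 0 < N) (x : Fin N → ℂ)
    (t : ℕ → ℂ)
    (ht : ∀ k ≤ N - 1,
      t k = ∑ n : Fin N,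
        if hn : (n : ℕ) + k < N then conj (x n) * x ⟨(n : ℕ) + k, hn⟩ else 0) :
    (∑ n₁ : Fin N, ∑ n₂ : Fin N, ∑ n₃ : Fin N, ∑ n₄ : Fin N,
        if (n₁ : ℤ) - (n₃ : ℤ) = -((n₂ : ℤ) - (n₄ : ℤ)) then
          conj (x n₃) * x n₁ * (conj (x n₄) * x n₂)
        else 0)
      = ((‖t 0‖ ^ 2
          + 2 * ∑ k ∈ Finset.Icc 1 (N - 1), ‖t k‖ ^ 2 : ℝ) : ℂ) := by
  classical
  set D : Finset ℤ := Finset.Icc (1 - (N : ℤ)) ((N : ℤ) - 1) with hD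
  set c : ℤ → ℂ := fun d => ∑ n₁ : Fin N, ∑ n₃ : Fin N,
      if (n₁ : ℤ) - (n₃ : ℤ) = d then conj (x n₃) * x n₁ else 0 with hc
  -- c of negative is conjugate
  have hconj : ∀ d : ℤ, c (-d) = conj (c d) := by
    intro d
    simp only [hc, map_sum, apply_ite conj, map_mul, Complex.conj_conj, map_zero]
    rw [Finset.sum_comm]
    refine Finset.sum_congr rfl fun n₃ _ => Finset.sum_congr rfl fun n₁ _ => ?_
    by_cases h : (n₁ : ℤ) - (n₃ : ℤ) = -d
    · rw [if_pos h, if_pos (by omega), mul_comm]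
    · rw [if_neg h, if_neg (by omega)]
  -- c k = t k for k ≤ N - 1
  have hct : ∀ k : ℕ, k ≤ N - 1 → c (k : ℤ) = t k := by
    intro k hk
    rw [ht k hk]
    simp only [hc]
    rw [Finset.sum_comm]
    refine Finset.sum_congr rfl fun n₃ _ => ?_
    by_cases h : (n₃ : ℕ) + k < N
    · rw [dif_pos h]
      rw [Finset.sum_eq_single (⟨(n₃ : ℕ) + k, h⟩ : Fin N)]
      · rw [if_pos (by push_cast; omega)]
      · intro n₁ _ hn₁
        rw [if_neg]
        intro hcond
        exact hn₁ (Fin.ext (by simp only [Fin.val_mk]; omega))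
      · intro h'; exact absurd (Finset.mem_univ _) h'
    · rw [dif_neg h]
      refine Finset.sum_eq_zero fun n₁ _ => ?_
      rw [if_neg]
      intro hcond
      have := n₁.isLt
      omega
  -- pointwise expansion of the condition as a sum over d
  have point : ∀ (n₁ n₂ n₃ n₄ : Fin N),
      (if (n₁ : ℤ) - (n₃ : ℤ) = -((n₂ : ℤ) - (n₄ : ℤ)) then
          conj (x n₃) * x n₁ * (conj (x n₄) * x n₂) else 0)
      = ∑ d ∈ D, (if (n₁ : ℤ) - (n₃ : ℤ) = d then conj (x n₃) * x n₁ else 0)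
          * (if (n₂ : ℤ) - (n₄ : ℤ) = -d then conj (x n₄) * x n₂ else 0) := by
    intro n₁ n₂ n₃ n₄
    rw [Finset.sum_eq_single ((n₁ : ℤ) - (n₃ : ℤ))]
    · by_cases h : (n₁ : ℤ) - (n₃ : ℤ) = -((n₂ : ℤ) - (n₄ : ℤ))
      · rw [if_pos h, if_pos rfl, if_pos (by omega)]
      · rw [if_neg h, if_pos rfl, if_neg (by omega), mul_zero]
    · intro d _ hd
      rw [if_neg (fun h => hd h.symm), zero_mul]
    · intro h
      exfalso; apply h
      have h1 := n₁.isLt; have h3 := n₃.isLt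
      rw [hD, Finset.mem_Icc]
      omega
  have key : (∑ n₁ : Fin N, ∑ n₂ : Fin N, ∑ n₃ : Fin N, ∑ n₄ : Fin N,
        if (n₁ : ℤ) - (n₃ : ℤ) = -((n₂ : ℤ) - (n₄ : ℤ)) then
          conj (x n₃) * x n₁ * (conj (x n₄) * x n₂)
        else 0)
      = ∑ d ∈ D, c d * c (-d) := by
    calc (∑ n₁ : Fin N, ∑ n₂ : Fin N, ∑ n₃ : Fin N, ∑ n₄ : Fin N,
        if (n₁ : ℤ) - (n₃ : ℤ) = -((n₂ : ℤ) - (n₄ : ℤ)) then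
          conj (x n₃) * x n₁ * (conj (x n₄) * x n₂)
        else 0)
        = ∑ n₁ : Fin N, ∑ n₃ : Fin N, ∑ n₂ : Fin N, ∑ n₄ : Fin N,
          ∑ d ∈ D, (if (n₁ : ℤ) - (n₃ : ℤ) = d then conj (x n₃) * x n₁ else 0)
            * (if (n₂ : ℤ) - (n₄ : ℤ) = -d then conj (x n₄) * x n₂ else 0) := by
          rw [Finset.sum_congr rfl fun n₁ _ => Finset.sum_comm]
          exact Finset.sum_congr rfl fun n₁ _ => Finset.sum_congr rfl fun n₃ _ =>
            Finset.sum_congr rfl fun n₂ _ => Finset.sum_congr rfl fun n₄ _ =>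
              point n₁ n₂ n₃ n₄
      _ = ∑ n₁ : Fin N, ∑ n₃ : Fin N, ∑ d ∈ D,
            (if (n₁ : ℤ) - (n₃ : ℤ) = d then conj (x n₃) * x n₁ else 0) * c (-d) := by
          refine Finset.sum_congr rfl fun n₁ _ => Finset.sum_congr rfl fun n₃ _ => ?_
          rw [Finset.sum_congr rfl fun n₂ _ => Finset.sum_comm, Finset.sum_comm]
          refine Finset.sum_congr rfl fun d _ => ?_
          simp only [hc, ← Finset.mul_sum]
      _ = ∑ d ∈ D, c d * c (-d) := by
          rw [Finset.sum_congr rfl fun n₁ _ => Finset.sum_comm, Finset.sum_comm]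
          refine Finset.sum_congr rfl fun d _ => ?_
          simp only [hc, ← Finset.sum_mul]
  rw [key]
  -- rewrite each term as a real square
  have habs : ∀ d : ℤ, c d * c (-d) = ((‖c d‖ ^ 2 : ℝ) : ℂ) := by
    intro d
    rw [hconj d, Complex.mul_conj, Complex.sq_norm]
  simp only [habs]
  rw [← Complex.ofReal_sum]
  norm_cast
  -- now a real statement
  set H : ℤ → ℝ := fun d => ‖c d‖ ^ 2 with hH
  have hHneg : ∀ d : ℤ, H (-d) = H d := by
    intro d
    simp only [hH, hconj d, Complex.norm_conj]
  -- split the sum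
  have hsplit : D = (Finset.Icc (1 - (N : ℤ)) (-1)) ∪ (Finset.Icc (0 : ℤ) ((N : ℤ) - 1)) := by
    rw [hD]; ext d; simp only [Finset.mem_union, Finset.mem_Icc]; omega
  have hdisj : Disjoint (Finset.Icc (1 - (N : ℤ)) (-1)) (Finset.Icc (0 : ℤ) ((N : ℤ) - 1)) := by
    rw [Finset.disjoint_left]
    intro a ha hb
    simp only [Finset.mem_Icc] at ha hb
    omega
  have hins : Finset.Icc (0 : ℤ) ((N : ℤ) - 1)
      = insert 0 (Finset.Icc (1 : ℤ) ((N : ℤ) - 1)) := by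
    ext d; simp only [Finset.mem_insert, Finset.mem_Icc]; omega
  have hnotmem : (0 : ℤ) ∉ Finset.Icc (1 : ℤ) ((N : ℤ) - 1) := by
    simp only [Finset.mem_Icc]; omega
  have hneg : ∑ d ∈ Finset.Icc (1 - (N : ℤ)) (-1), H d
      = ∑ k ∈ Finset.Icc (1 : ℤ) ((N : ℤ) - 1), H k := by
    have himg : Finset.Icc (1 - (N : ℤ)) (-1)
        = (Finset.Icc (1 : ℤ) ((N : ℤ) - 1)).image (fun k => -k) := by
      ext d
      simp only [Finset.mem_image, Finset.mem_Icc]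
      constructor
      · intro h; exact ⟨-d, by omega, by omega⟩
      · rintro ⟨k, hk, rfl⟩; omega
    rw [himg, Finset.sum_image (by intro a _ b _ h; simpa using h)]
    exact Finset.sum_congr rfl fun k _ => hHneg k
  have hnat : ∑ k ∈ Finset.Icc (1 : ℤ) ((N : ℤ) - 1), H k
      = ∑ k ∈ Finset.Icc (1 : ℕ) (N - 1), ‖t k‖ ^ 2 := by
    have himg : Finset.Icc (1 : ℤ) ((N : ℤ) - 1)
        = (Finset.Icc (1 : ℕ) (N - 1)).image (fun k : ℕ => (k : ℤ)) := by
      ext d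
      simp only [Finset.mem_image, Finset.mem_Icc]
      constructor
      · intro h; exact ⟨d.toNat, by omega, by omega⟩
      · rintro ⟨k, hk, rfl⟩; omega
    rw [himg, Finset.sum_image (by intro a _ b _ h; simpa using h)]
    refine Finset.sum_congr rfl fun k hk => ?_
    simp only [Finset.mem_Icc] at hk
    simp only [hH, hct k (by omega)]
  have h0 : c 0 = t 0 := by simpa using hct 0 (by omega)
  rw [hsplit, Finset.sum_union hdisj, hneg, hins, Finset.sum_insert hnotmem, hnat]
  simp only [hH, h0]
  ring
end

section
/- Let M, N, T, Q be positive integers, β₂ > 0 and β₄ > 0 real numbers, and w : {1,…,Q} → ℝ with w_q ≥ 0 for all q. For each t ∈ {1,…,T} and q ∈ {1,…,Q}, let h_q^{[t]} ∈ ℂ^{MN} be indexed by pairs (n,m) ∈ {0,…,N−1}×{0,…,M−1}, and for 0 ≤ k ≤ N−1 let M_{q,k}^{[t]} be the MN×MN matrix with entry ((n,m),(n′,m′)) equal to conj(h_q^{[t]}{}_{(n,m)})·h_q^{[t]}{}_{(n′,m′)} if n′ − n = k and 0 otherwise. Let t_{q,0}^{[t]} ≥ 0 be real numbers and t_{q,k}^{[t]}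 ∈ ℂ for 1 ≤ k ≤ N−1, and define C₁ := ∑_{t=1}^{T} ∑_{q=1}^{Q} w_q·( −(β₂ + 3β₄ t_{q,0}^{[t]})/2 · M_{q,0}^{[t]} − 3β₄·∑_{k=1}^{N−1} conj(t_{q,k}^{[t]})·M_{q,k}^{[t]} ) and A₁ := C₁ + C₁ᴴ. If ∑_{t=1}^{T} ∑_{q=1}^{Q} w_q·‖h_q^{[t]}‖² > 0, then the Hermitian matrix A₁ has at least one negative eigenvalue, i.e. there exists an index i such that the i-th (real) eigenvalue of A₁ is strictly less than 0. -/
open Matrix BigOperators Finset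
open scoped ComplexConjugate

/-- The `k`-th block diagonal of the outer-product matrix `conj h * hᵀ`:
entry `((n,m),(n',m'))` equals `conj (h (n,m)) * h (n',m')` if `n' - n = k` and `0` otherwise. -/
noncomputable def blockMat (M N : ℕ) (h : Fin N × Fin M → ℂ) (k : ℤ) :
    Matrix (Fin N × Fin M) (Fin N × Fin M) ℂ :=
  Matrix.of fun p p' => if ((p'.1 : ℤ) - (p.1 : ℤ) = k) then conj (h p) * h p' else 0

lemma trace_eq_sum_eig {n : Type*} [Fintype n] [DecidableEq n]
    {A : Matrix n n ℂ} (hA : A.IsHermitian) :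
    A.trace = ∑ i, (hA.eigenvalues i : ℂ) := by
  conv_lhs => rw [hA.spectral_theorem]
  rw [Unitary.conjStarAlgAut_apply, Matrix.trace_mul_cycle,
    (Matrix.mem_unitaryGroup_iff').mp (hA.eigenvectorUnitary).2, Matrix.one_mul,
    Matrix.trace_diagonal]
  rfl

lemma trace_blockMat_zero (M N : ℕ) (h : Fin N × Fin M → ℂ) :
    (blockMat M N h 0).trace = ((∑ i, ‖h i‖^2 : ℝ) : ℂ) := by
  simp only [Matrix.trace, Matrix.diag, blockMat, Matrix.of_apply, sub_self, if_pos rfl]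
  push_cast
  congr 1; ext p
  rw [mul_comm, Complex.mul_conj]
  norm_cast
  exact (Complex.sq_norm _).symm

lemma trace_blockMat_ne (M N : ℕ) (h : Fin N × Fin M → ℂ) {k : ℤ} (hk : k ≠ 0) :
    (blockMat M N h k).trace = 0 := by
  simp only [Matrix.trace, Matrix.diag, blockMat, Matrix.of_apply, sub_self]
  simp [if_neg (Ne.symm hk)]

/-- Proposition 1: the Hermitian matrix `A₁ = C₁ + C₁ᴴ` of the SAA algorithm always
has at least one negative eigenvalue. -/
theorem A1_has_negative_eigenvalue (M N T Q : ℕ)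
    (hM : 0 < M) (hN : 0 < N) (hT : 0 < T) (hQ : 0 < Q)
    (β₂ β₄ : ℝ) (hβ₂ : 0 < β₂) (hβ₄ : 0 < β₄)
    (w : Fin Q → ℝ) (hw : ∀ q, 0 ≤ w q)
    (h : Fin T → Fin Q → (Fin N × Fin M → ℂ))
    (t0 : Fin T → Fin Q → ℝ) (ht0 : ∀ t q, 0 ≤ t0 t q)
    (tk : Fin T → Fin Q → ℕ → ℂ)
    (C₁ A₁ : Matrix (Fin N × Fin M) (Fin N × Fin M) ℂ)
    (hC₁ : C₁ = ∑ t : Fin T, ∑ q : Fin Q, (w q : ℂ) •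
      ((-(((β₂ + 3 * β₄ * t0 t q) / 2 : ℝ) : ℂ)) • blockMat M N (h t q) 0
        - ((3 * β₄ : ℝ) : ℂ) • ∑ k ∈ Finset.Icc 1 (N - 1),
            conj (tk t q k) • blockMat M N (h t q) (k : ℤ)))
    (hA₁ : A₁ = C₁ + C₁ᴴ)
    (hHerm : A₁.IsHermitian)
    (hpos : 0 < ∑ t : Fin T, ∑ q : Fin Q,
      w q * ∑ i : Fin N × Fin M, ‖h t q i‖ ^ 2) :
    ∃ i : Fin N × Fin M, hHerm.eigenvalues i < 0 := by
  set S : Fin T → Fin Q → ℝ := fun t q => ∑ i, ‖h t q i‖^2 with hS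
  set r : ℝ := ∑ t : Fin T, ∑ q : Fin Q,
      w q * (-((β₂ + 3 * β₄ * t0 t q) / 2)) * S t q with hr
  -- trace of C₁
  have htrC : C₁.trace = (r : ℂ) := by
    rw [hC₁]
    rw [Matrix.trace_sum]
    simp only [Matrix.trace_sum, Matrix.trace_smul, Matrix.trace_sub]
    push_cast [hr]
    congr 1; ext t; congr 1; ext q
    have hz : ∑ k ∈ Finset.Icc 1 (N - 1),
        conj (tk t q k) • (blockMat M N (h t q) (k : ℤ)).trace = 0 := by
      refine Finset.sum_eq_zero fun k hk => ?_
      rw [trace_blockMat_ne]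
      · simp
      · exact_mod_cast Nat.one_le_iff_ne_zero.mp (Finset.mem_Icc.mp hk).1
    rw [hz, trace_blockMat_zero]
    simp only [smul_eq_mul, hS]
    push_cast
    ring
  -- trace of A₁
  have htrA : A₁.trace = ((2 * r : ℝ) : ℂ) := by
    rw [hA₁, Matrix.trace_add, Matrix.trace_conjTranspose, htrC]
    push_cast
    simp only [RCLike.star_def, Complex.conj_ofReal]
    ring
  -- r < 0
  have hr_neg : 2 * r < 0 := by
    have hle : ∀ t q, w q * (-((β₂ + 3 * β₄ * t0 t q) / 2)) * S t q
        ≤ -(β₂ / 2) * (w q * S t q) := by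
      intro t q
      have hS0 : 0 ≤ S t q := Finset.sum_nonneg fun i _ => sq_nonneg _
      have h1 : β₂ ≤ β₂ + 3 * β₄ * t0 t q := by
        nlinarith [ht0 t q, hβ₄.le]
      nlinarith [mul_nonneg (hw q) hS0]
    have : r ≤ -(β₂ / 2) * ∑ t : Fin T, ∑ q : Fin Q, w q * S t q := by
      rw [Finset.mul_sum]
      refine Finset.sum_le_sum fun t _ => ?_
      rw [Finset.mul_sum]
      exact Finset.sum_le_sum fun q _ => hle t q
    have hpos' : 0 < ∑ t : Fin T, ∑ q : Fin Q, w q * S t q := hpos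
    nlinarith
  -- sum of eigenvalues = 2r
  have hsum : ∑ i, hHerm.eigenvalues i = 2 * r := by
    have := trace_eq_sum_eig hHerm
    rw [htrA] at this
    have : ((2 * r : ℝ) : ℂ) = ((∑ i, hHerm.eigenvalues i : ℝ) : ℂ) := by
      rw [this]; push_cast; rfl
    exact (Complex.ofReal_inj.mp this).symm
  by_contra hcon
  push_neg at hcon
  have : 0 ≤ ∑ i, hHerm.eigenvalues i := Finset.sum_nonneg fun i _ => hcon i
  linarith [hsum ▸ this]
end
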